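/- Let X be a compact Hausdorff space, r : X → X a retraction, and A, B subsets of X with A ⊆ r(X), B countable, such that: B is discrete in the subspace X \ Y for some set Y disjoint from B with cl_X(B) \ B ⊆ Y, and cl_X(B) \ B ⊆ r(X). Define R : AD(X) → AD(X) by R(x,1) = (x,1) if x ∈ A ∪ B, and R(x,i) = (r(x),0) otherwise. Then R is a continuous retraction on the Alexandroff duplicate AD(X). -/

import Mathlib

/-- The Alexandroff duplicate of `X`, as a type. -/
def AD (X : Type*) := X × Bool

/-- The Alexandroff duplicate topology: all points of `X × {1}` are isolated and the basic
neighbourhoods of `(x, 0)` are the sets `(U × {0,1}) \ {(x,1)}` with `U` an open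
neighbourhood of `x`. -/
instance (X : Type*) [TopologicalSpace X] : TopologicalSpace (AD X) where
  IsOpen S := ∀ x : X, ((x, false) : X × Bool) ∈ S →
    ∃ U : Set X, IsOpen U ∧ x ∈ U ∧
      (U ×ˢ (Set.univ : Set Bool)) \ {((x, true) : X × Bool)} ⊆ S
  isOpen_univ := fun x _ => ⟨Set.univ, isOpen_univ, trivial, fun _ _ => trivial⟩
  isOpen_inter := by
    intro S T hS hT x hx
    obtain ⟨U, hU, hxU, hUS⟩ := hS x hx.1
    obtain ⟨V, hV, hxV, hVT⟩ := hT x hx.2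
    refine ⟨U ∩ V, hU.inter hV, ⟨hxU, hxV⟩, fun p hp => ?_⟩
    exact ⟨hUS ⟨⟨hp.1.1.1, hp.1.2⟩, hp.2⟩, hVT ⟨⟨hp.1.1.2, hp.1.2⟩, hp.2⟩⟩
  isOpen_sUnion := by
    intro 𝒮 h x hx
    obtain ⟨S, hS, hxS⟩ := hx
    obtain ⟨U, hU, hxU, hUS⟩ := h S hS x hxS
    exact ⟨U, hU, hxU, fun p hp => ⟨S, hS, hUS hp⟩⟩

/-- Lemma 4.5: Under the stated hypotheses on `r`, `A`, `B`, `Y`, the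
map `R` on the Alexandroff duplicate fixing `(A ∪ B) × {1}` and sending everything else
via `r` into `X × {0}` is a continuous retraction of `AD X`. -/
theorem alexandroff_duplicate_retraction {X : Type*} [TopologicalSpace X] [CompactSpace X]
    [T2Space X]
    (r : X → X) (hrc : Continuous r) (hrr : ∀ x, r (r x) = r x)
    (A B Y : Set X)
    (hA : A ⊆ Set.range r) (hBc : B.Countable)
    (hBY : Disjoint B Y)
    (hdisc : ∀ x ∈ B, ∃ U : Set X, IsOpen U ∧ x ∈ U ∧ U ∩ Yᶜ ∩ B = {x})
    (hclB : closure B \ B ⊆ Y)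
    (hclBr : closure B \ B ⊆ Set.range r)
    (R : AD X → AD X)
    (hR1 : ∀ x ∈ A ∪ B, R (x, true) = (x, true))
    (hR2 : ∀ x ∉ A ∪ B, R (x, true) = (r x, false))
    (hR3 : ∀ x : X, R (x, false) = (r x, false)) :
    Continuous R ∧ ∀ q : AD X, R (R q) = R q := by
  have hfix : ∀ x ∈ Set.range r, r x = x := by
    rintro _ ⟨y, rfl⟩; exact hrr y
  constructor
  · rw [continuous_def]
    intro S hS
    show ∀ x : X, ((x, false) : X × Bool) ∈ R ⁻¹' S → ∃ U : Set X, IsOpen U ∧ x ∈ U ∧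
      (U ×ˢ (Set.univ : Set Bool)) \ {((x, true) : X × Bool)} ⊆ R ⁻¹' S
    intro x hx
    have hx : R (x, false) ∈ S := hx
    rw [hR3] at hx
    obtain ⟨V, hV, hrxV, hVS⟩ := hS (r x) hx
    have hUB : ∃ UB : Set X, IsOpen UB ∧ x ∈ UB ∧
        ∀ u, u ∈ UB → u ∈ B → u ≠ x → u ∈ V := by
      by_cases hxB : x ∈ B
      · obtain ⟨U1, hU1o, hxU1, hU1⟩ := hdisc x hxB
        refine ⟨U1, hU1o, hxU1, fun u huU huB hne => absurd ?_ hne⟩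
        have huY : u ∉ Y := Set.disjoint_left.1 hBY huB
        have h2 : u ∈ U1 ∩ Yᶜ ∩ B := ⟨⟨huU, huY⟩, huB⟩
        rw [hU1] at h2; exact h2
      · by_cases hxcl : x ∈ closure B
        · have hxr : r x = x := hfix x (hclBr ⟨hxcl, hxB⟩)
          exact ⟨V, hV, hxr ▸ hrxV, fun u huU _ _ => huU⟩
        · exact ⟨(closure B)ᶜ, isClosed_closure.isOpen_compl, hxcl,
            fun u huU huB _ => absurd (subset_closure huB) huU⟩
    obtain ⟨UB, hUBo, hxUB, hUBV⟩ := hUB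
    have hW : ∃ W : Set X, IsOpen W ∧ x ∈ W ∧ ∀ u ∈ W, u ≠ x → u ≠ r x := by
      by_cases hrx : r x = x
      · exact ⟨Set.univ, isOpen_univ, trivial, fun u _ hne => by rwa [hrx]⟩
      · refine ⟨{r x}ᶜ, isClosed_singleton.isOpen_compl, ?_, fun u hu _ => hu⟩
        simp only [Set.mem_compl_iff, Set.mem_singleton_iff]
        exact fun h => hrx h.symm
    obtain ⟨W, hWo, hxW, hWne⟩ := hW
    refine ⟨r ⁻¹' V ∩ W ∩ UB, ((hV.preimage hrc).inter hWo).inter hUBo,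
      ⟨⟨hrxV, hxW⟩, hxUB⟩, ?_⟩
    rintro ⟨u, b⟩ ⟨⟨⟨⟨huV, huW⟩, huUB⟩, -⟩, hne⟩
    simp only [Set.mem_singleton_iff, Prod.mk.injEq, not_and] at hne
    cases b with
    | false =>
        show R (u, false) ∈ S
        rw [hR3]
        exact hVS ⟨⟨huV, trivial⟩, by simp⟩
    | true =>
        have hux : u ≠ x := fun h => (hne h) rfl
        by_cases hAB : u ∈ A ∪ B
        · show R (u, true) ∈ S
          rw [hR1 u hAB]
          have huV' : u ∈ V := by
            cases hAB with
            | inl h =>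
                have h2 : r u ∈ V := huV
                rwa [hfix u (hA h)] at h2
            | inr h => exact hUBV u huUB h hux
          refine hVS ⟨⟨huV', trivial⟩, ?_⟩
          simp only [Set.mem_singleton_iff, Prod.mk.injEq, not_and]
          exact fun h => absurd h (hWne u huW hux)
        · show R (u, true) ∈ S
          rw [hR2 u hAB]
          exact hVS ⟨⟨huV, trivial⟩, by simp⟩
  · rintro ⟨x, b⟩
    cases b with
    | false => rw [hR3, hR3, hrr]
    | true =>
        by_cases h : x ∈ A ∪ B
        · rw [hR1 x h, hR1 x h]
        · rw [hR2 x h, hR3, hrr]
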